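/- arXiv:2303.16834 — 3 statements merged into one kernel-verified Lean document; each statement's English description precedes it below -/
import Mathlib

section
/- Let Γ be an irreducible finite directed graph and Γ' a degree-two cover of Γ. Then either Γ' is irreducible, or Γ' has exactly two connected components, each isomorphic to Γ as a directed graph. -/
/-- A directed (multi)graph on vertex set `V` with edge set `E`. -/
structure Digraph' (V E : Type) where
  src : E → V
  tgt : E → V

/-- A directed graph is irreducible if for any two vertices `u`, `v` there is a
(nonempty) directed path from `u` to `v`. -/
def Digraph'.Irreducible {V E : Type} (Γ : Digraph' V E) : Prop :=
  ∀ u v : V, Relation.TransGen (fun a b => ∃ e : E, Γ.src e = a ∧ Γ.tgt e = b) u v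

/-- `Γ'` is a degree-two cover of `Γ` via `pV, pE`: the projections commute with
source and target, every vertex has exactly two preimages, and the projection is a local
isomorphism (bijective on outgoing and on incoming edges at every vertex). -/
def IsDegreeTwoCover {V E V' E' : Type} (Γ' : Digraph' V' E') (Γ : Digraph' V E)
    (pV : V' → V) (pE : E' → E) : Prop :=
  (∀ e : E', pV (Γ'.src e) = Γ.src (pE e)) ∧
  (∀ e : E', pV (Γ'.tgt e) = Γ.tgt (pE e)) ∧
  (∀ v : V, Nat.card {v' : V' // pV v' = v} = 2) ∧
  (∀ (v' : V') (e : E), Γ.src e = pV v' → ∃! e' : E', Γ'.src e' = v' ∧ pE e' = e) ∧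
  (∀ (v' : V') (e : E), Γ.tgt e = pV v' → ∃! e' : E', Γ'.tgt e' = v' ∧ pE e' = e)

/-- Let `Γ` be an irreducible finite directed graph and `Γ'` a degree-two cover of `Γ`.
Then either `Γ'` is irreducible, or `Γ'` has two connected components, each isomorphic to
`Γ` (i.e. `Γ'` is isomorphic to the disjoint union of two copies of `Γ`). -/
theorem degree_two_cover_irreducible_or_two_components
    (V E V' E' : Type) [Fintype V] [Fintype E] [Fintype V'] [Fintype E']
    (Γ : Digraph' V E) (Γ' : Digraph' V' E')
    (pV : V' → V) (pE : E' → E)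
    (hcov : IsDegreeTwoCover Γ' Γ pV pE)
    (hirr : Γ.Irreducible) :
    Γ'.Irreducible ∨
      ∃ (fV : V ⊕ V ≃ V') (fE : E ⊕ E ≃ E'),
        (∀ e : E, Γ'.src (fE (Sum.inl e)) = fV (Sum.inl (Γ.src e)) ∧
            Γ'.tgt (fE (Sum.inl e)) = fV (Sum.inl (Γ.tgt e))) ∧
        (∀ e : E, Γ'.src (fE (Sum.inr e)) = fV (Sum.inr (Γ.src e)) ∧
            Γ'.tgt (fE (Sum.inr e)) = fV (Sum.inr (Γ.tgt e))) := by

  obtain ⟨hsrc, htgt, hcard, hout, hin⟩ := hcov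
  by_cases hirr' : Γ'.Irreducible
  · exact Or.inl hirr'
  right
  -- local notation for edge relations
  have liftF : ∀ {a b : V},
      Relation.TransGen (fun a b => ∃ e : E, Γ.src e = a ∧ Γ.tgt e = b) a b →
      ∀ u' : V', pV u' = a → ∃ v', pV v' = b ∧
        Relation.TransGen (fun a b => ∃ e : E', Γ'.src e = a ∧ Γ'.tgt e = b) u' v' := by
    intro a b h
    induction h with
    | single h =>
      intro u' hu
      obtain ⟨e, he1, he2⟩ := h
      obtain ⟨e', ⟨hsrce, hpe⟩, -⟩ := hout u' e (he1.trans hu.symm)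
      exact ⟨Γ'.tgt e', by rw [htgt, hpe, he2],
        Relation.TransGen.single ⟨e', hsrce, rfl⟩⟩
    | tail h₁ h₂ ih =>
      intro u' hu
      obtain ⟨m', hm, hpath⟩ := ih u' hu
      obtain ⟨e, he1, he2⟩ := h₂
      obtain ⟨e', ⟨hsrce, hpe⟩, -⟩ := hout m' e (he1.trans hm.symm)
      exact ⟨Γ'.tgt e', by rw [htgt, hpe, he2], hpath.tail ⟨e', hsrce, rfl⟩⟩
  have liftB : ∀ {a b : V},
      Relation.TransGen (fun a b => ∃ e : E, Γ.src e = a ∧ Γ.tgt e = b) a b →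
      ∀ w' : V', pV w' = b → ∃ a', pV a' = a ∧
        Relation.TransGen (fun a b => ∃ e : E', Γ'.src e = a ∧ Γ'.tgt e = b) a' w' := by
    intro a b h
    induction h with
    | single h =>
      intro w' hw
      obtain ⟨e, he1, he2⟩ := h
      obtain ⟨e', ⟨htgte, hpe⟩, -⟩ := hin w' e (he2.trans hw.symm)
      exact ⟨Γ'.src e', by rw [hsrc, hpe, he1],
        Relation.TransGen.single ⟨e', rfl, htgte⟩⟩
    | tail h₁ h₂ ih =>
      intro w' hw
      obtain ⟨e, he1, he2⟩ := h₂
      obtain ⟨e', ⟨htgte, hpe⟩, -⟩ := hin w' e (he2.trans hw.symm)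
      obtain ⟨a', ha, hpath⟩ := ih (Γ'.src e') (by rw [hsrc, hpe, he1])
      exact ⟨a', ha, hpath.tail ⟨e', rfl, htgte⟩⟩
  -- a failing pair
  rw [Digraph'.Irreducible] at hirr'
  push_neg at hirr'
  obtain ⟨u₀, v₀, hv₀⟩ := hirr'
  set S : V' → Prop := fun w' =>
    Relation.TransGen (fun a b => ∃ e : E', Γ'.src e = a ∧ Γ'.tgt e = b) u₀ w' with hS
  -- fibers have exactly two elements
  have fiber2 : ∀ v : V, ∃ a b : V', pV a = v ∧ pV b = v ∧ a ≠ b ∧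
      ∀ c : V', pV c = v → c = a ∨ c = b := by
    intro v
    have h2 := hcard v
    rw [Nat.card_eq_two_iff] at h2
    obtain ⟨⟨a, ha⟩, ⟨b, hb⟩, hab, huniv⟩ := h2
    refine ⟨a, b, ha, hb, fun h => hab (Subtype.ext h), fun c hc => ?_⟩
    have hmem : (⟨c, hc⟩ : {v' : V' // pV v' = v}) ∈
        ({⟨a, ha⟩, ⟨b, hb⟩} : Set {v' : V' // pV v' = v}) := by
      rw [huniv]; exact Set.mem_univ _
    rcases hmem with h | h
    · exact Or.inl (congrArg Subtype.val h)
    · exact Or.inr (congrArg Subtype.val h)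
  have reachS : ∀ v : V, ∃ w', pV w' = v ∧ S w' := by
    intro v
    obtain ⟨w', hw, hp⟩ := liftF (hirr (pV u₀) v) u₀ rfl
    exact ⟨w', hw, hp⟩
  have notBoth : ∀ x y : V', pV x = pV y → x ≠ y → S x → S y → False := by
    intro x y hxy hne hx hy
    obtain ⟨a', ha, hpath⟩ := liftB (hirr (pV x) (pV v₀)) v₀ rfl
    obtain ⟨a, b, hA, hB, hab, hall⟩ := fiber2 (pV x)
    have hx' := hall x rfl
    have hy' := hall y hxy.symm
    have ha' := hall a' ha
    have hOr : a' = x ∨ a' = y := by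
      rcases hx' with h1 | h1 <;> rcases hy' with h2 | h2 <;>
        rcases ha' with h3 | h3 <;> subst_vars <;> tauto
    have haS : S a' := by rcases hOr with rfl | rfl <;> assumption
    exact hv₀ (haS.trans hpath)
  -- choose the section s (in S) and the complement t (not in S)
  have exS : ∀ v : V, ∃ sv tv : V', pV sv = v ∧ S sv ∧ pV tv = v ∧ ¬ S tv ∧
      ∀ c : V', pV c = v → c = sv ∨ c = tv := by
    intro v
    obtain ⟨a, b, hA, hB, hab, hall⟩ := fiber2 v
    obtain ⟨w', hw, hwS⟩ := reachS v
    rcases hall w' hw with rfl | rfl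
    · refine ⟨w', b, hw, hwS, hB, fun hbS => ?_, hall⟩
      exact notBoth w' b (hw.trans hB.symm) hab hwS hbS
    · refine ⟨w', a, hw, hwS, hA, fun haS => ?_, fun c hc => (hall c hc).symm⟩
      exact notBoth w' a (hw.trans hA.symm) (Ne.symm hab) hwS haS
  choose s t hs hsS ht htS hall using exS
  have stne : ∀ v, s v ≠ t v := fun v h => htS v (h ▸ hsS v)
  -- lifts of edges at s and t
  have liftAt : ∀ (e : E) (v' : V'), pV v' = Γ.src e →
      ∃ e', Γ'.src e' = v' ∧ pE e' = e := by
    intro e v' hv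
    obtain ⟨e', he, -⟩ := hout v' e hv.symm
    exact ⟨e', he⟩
  choose lS hlSsrc hlSpE using fun e => liftAt e (s (Γ.src e)) (hs _)
  choose lT hlTsrc hlTpE using fun e => liftAt e (t (Γ.src e)) (ht _)
  have tgtS : ∀ e, Γ'.tgt (lS e) = s (Γ.tgt e) := by
    intro e
    have hp : pV (Γ'.tgt (lS e)) = Γ.tgt e := by rw [htgt, hlSpE]
    have hmem : S (Γ'.tgt (lS e)) :=
      Relation.TransGen.tail (hsS _) ⟨lS e, hlSsrc e, rfl⟩
    rcases hall _ _ hp with h | h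
    · exact h
    · exact absurd (h ▸ hmem) (htS _)
  have tgtT : ∀ e, Γ'.tgt (lT e) = t (Γ.tgt e) := by
    intro e
    have hp : pV (Γ'.tgt (lT e)) = Γ.tgt e := by rw [htgt, hlTpE]
    rcases hall _ _ hp with h | h
    · exfalso
      obtain ⟨e'', -, huniq⟩ := hin (s (Γ.tgt e)) e (hs _).symm
      have h1 : lS e = e'' := huniq _ ⟨tgtS e, hlSpE e⟩
      have h2 : lT e = e'' := huniq _ ⟨h, hlTpE e⟩
      have hst : s (Γ.src e) = t (Γ.src e) := by
        rw [← hlSsrc e, ← hlTsrc e, h1, h2]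
      exact stne _ hst
    · exact h
  -- the vertex bijection
  have hVinj : Function.Injective (Sum.elim s t : V ⊕ V → V') := by
    rintro (a | a) (b | b) h <;> simp only [Sum.elim_inl, Sum.elim_inr] at h
    · have : a = b := by rw [← hs a, ← hs b, h]
      exact congrArg Sum.inl this
    · exfalso
      have hab : a = b := by rw [← hs a, ← ht b, h]
      subst hab
      exact stne a h
    · exfalso
      have hab : a = b := by rw [← ht a, ← hs b, h]
      subst hab
      exact stne a h.symm
    · have : a = b := by rw [← ht a, ← ht b, h]
      exact congrArg Sum.inr this
  have hVsurj : Function.Surjective (Sum.elim s t : V ⊕ V → V') := by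
    intro v'
    rcases hall (pV v') v' rfl with h | h
    · exact ⟨Sum.inl (pV v'), h.symm⟩
    · exact ⟨Sum.inr (pV v'), h.symm⟩
  have hEinj : Function.Injective (Sum.elim lS lT : E ⊕ E → E') := by
    rintro (a | a) (b | b) h <;> simp only [Sum.elim_inl, Sum.elim_inr] at h
    · have : a = b := by rw [← hlSpE a, ← hlSpE b, h]
      exact congrArg Sum.inl this
    · exfalso
      have hab : a = b := by rw [← hlSpE a, ← hlTpE b, h]
      subst hab
      have : s (Γ.src a) = t (Γ.src a) := by rw [← hlSsrc a, ← hlTsrc a, h]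
      exact stne _ this
    · exfalso
      have hab : a = b := by rw [← hlTpE a, ← hlSpE b, h]
      subst hab
      have : s (Γ.src a) = t (Γ.src a) := by rw [← hlSsrc a, ← hlTsrc a, h]
      exact stne _ this
    · have : a = b := by rw [← hlTpE a, ← hlTpE b, h]
      exact congrArg Sum.inr this
  have hEsurj : Function.Surjective (Sum.elim lS lT : E ⊕ E → E') := by
    intro e'
    obtain ⟨e'', -, huniq⟩ := hout (Γ'.src e') (pE e') (hsrc e').symm
    have he' : e' = e'' := huniq e' ⟨rfl, rfl⟩
    rcases hall (Γ.src (pE e')) (Γ'.src e') (hsrc e') with h | h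
    · refine ⟨Sum.inl (pE e'), ?_⟩
      have := huniq (lS (pE e')) ⟨by rw [hlSsrc, ← h], hlSpE _⟩
      simp only [Sum.elim_inl]
      rw [this, ← he']
    · refine ⟨Sum.inr (pE e'), ?_⟩
      have := huniq (lT (pE e')) ⟨by rw [hlTsrc, ← h], hlTpE _⟩
      simp only [Sum.elim_inr]
      rw [this, ← he']
  have hVbij : Function.Bijective (Sum.elim s t : V ⊕ V → V') := ⟨hVinj, hVsurj⟩
  have hEbij : Function.Bijective (Sum.elim lS lT : E ⊕ E → E') := ⟨hEinj, hEsurj⟩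
  refine ⟨Equiv.ofBijective _ hVbij, Equiv.ofBijective _ hEbij,
    fun e => ?_, fun e => ?_⟩
  · simp only [Equiv.ofBijective_apply, Sum.elim_inl]
    exact ⟨hlSsrc e, tgtS e⟩
  · simp only [Equiv.ofBijective_apply, Sum.elim_inr]
    exact ⟨hlTsrc e, tgtT e⟩
end

section
/- Let Γ be an irreducible finite directed graph with adjacency matrix A, and let Γ' be a degree-two cover of Γ with adjacency matrix A'. If Γ' is irreducible, then the Perron–Frobenius eigenvalues of A and A' are equal. -/
open scoped ENNReal

/-- The adjacency matrix of a finite directed graph: the `(u, v)` entry is the number of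
directed edges from `u` to `v`. -/
def Digraph'.adj {V E : Type} [Fintype E] [DecidableEq V] (Γ : Digraph' V E) :
    Matrix V V ℕ :=
  fun u v => (Finset.univ.filter (fun e : E => Γ.src e = u ∧ Γ.tgt e = v)).card

open Finset

section Aux

variable {V E V' E' : Type} [Fintype V] [DecidableEq V] [Fintype E]
  [Fintype V'] [DecidableEq V'] [Fintype E']
  (Γ : Digraph' V E) (Γ' : Digraph' V' E') (pV : V' → V) (pE : E' → E)

/-- The key counting lemma: summing the entries of `A'` in a row `v'` over the fiber of `v`
gives the entry `A (pV v') v`. -/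
lemma cover_row_sum (hcov : IsDegreeTwoCover Γ' Γ pV pE) (v' : V') (v : V) :
    ∑ w' ∈ univ.filter (fun w' => pV w' = v), Γ'.adj v' w' = Γ.adj (pV v') v := by
  obtain ⟨hsrc, htgt, -, hlift, -⟩ := hcov
  classical
  have hdisj : ((univ.filter (fun w' => pV w' = v) : Finset V') : Set V').PairwiseDisjoint
      (fun w' => univ.filter (fun e' : E' => Γ'.src e' = v' ∧ Γ'.tgt e' = w')) := by
    intro a ha b hb hab
    simp only [Finset.disjoint_left, mem_filter, mem_univ, true_and]
    rintro e' ⟨-, h1⟩ ⟨-, h2⟩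
    exact hab (h1 ▸ h2)
  have hbiU : (univ.filter (fun w' => pV w' = v)).biUnion
      (fun w' => univ.filter (fun e' : E' => Γ'.src e' = v' ∧ Γ'.tgt e' = w')) =
      univ.filter (fun e' : E' => Γ'.src e' = v' ∧ pV (Γ'.tgt e') = v) := by
    ext e'
    simp only [mem_biUnion, mem_filter, mem_univ, true_and]
    constructor
    · rintro ⟨w', hw', h1, rfl⟩; exact ⟨h1, hw'⟩
    · rintro ⟨h1, h2⟩; exact ⟨Γ'.tgt e', h2, h1, rfl⟩
  have hsum : ∑ w' ∈ univ.filter (fun w' => pV w' = v), Γ'.adj v' w' =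
      (univ.filter (fun e' : E' => Γ'.src e' = v' ∧ pV (Γ'.tgt e') = v)).card := by
    rw [← hbiU, Finset.card_biUnion]
    · rfl
    · intro a ha b hb hab
      exact hdisj ha hb hab
  rw [hsum]
  unfold Digraph'.adj
  apply Finset.card_bij (fun e' _ => pE e')
  · intro e' he'
    simp only [mem_filter, mem_univ, true_and] at he' ⊢
    exact ⟨by rw [← hsrc, he'.1], by rw [← htgt, he'.2]⟩
  · intro a ha b hb hab
    simp only [mem_filter, mem_univ, true_and] at ha hb
    have hex := hlift v' (pE a) (by rw [← hsrc, ha.1])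
    obtain ⟨c, -, hc⟩ := hex
    have h1 : a = c := hc a ⟨ha.1, rfl⟩
    have h2 : b = c := hc b ⟨hb.1, hab.symm⟩
    rw [h1, h2]
  · intro e he
    simp only [mem_filter, mem_univ, true_and] at he
    obtain ⟨e', ⟨he1, he2⟩, -⟩ := hlift v' e (by rw [he.1])
    refine ⟨e', ?_, he2⟩
    simp only [mem_filter, mem_univ, true_and]
    refine ⟨he1, ?_⟩
    rw [htgt, he2, he.2]

/-- The 0/1 matrix of the covering map on vertices. -/
def coverP : Matrix V' V ℕ := fun v' v => if pV v' = v then 1 else 0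

lemma coverP_mul (B : Matrix V V ℕ) (v' : V') (w : V) :
    (coverP pV * B) v' w = B (pV v') w := by
  classical
  simp [coverP, Matrix.mul_apply, ite_mul]

lemma mul_coverP (B : Matrix V' V' ℕ) (v' : V') (v : V) :
    (B * coverP pV) v' v = ∑ w' ∈ univ.filter (fun w' => pV w' = v), B v' w' := by
  classical
  simp [coverP, Matrix.mul_apply, mul_ite, Finset.sum_filter]

lemma cover_intertwine (hcov : IsDegreeTwoCover Γ' Γ pV pE) :
    Γ'.adj * coverP pV = coverP pV * Γ.adj := by
  ext v' v
  rw [mul_coverP, coverP_mul, cover_row_sum Γ Γ' pV pE hcov]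

lemma cover_intertwine_pow (hcov : IsDegreeTwoCover Γ' Γ pV pE) (n : ℕ) :
    Γ'.adj ^ n * coverP pV = coverP pV * Γ.adj ^ n := by
  induction n with
  | zero => simp
  | succ n ih =>
    rw [pow_succ, pow_succ, Matrix.mul_assoc, cover_intertwine Γ Γ' pV pE hcov,
      ← Matrix.mul_assoc, ih, Matrix.mul_assoc]

lemma cover_rowsum_pow (hcov : IsDegreeTwoCover Γ' Γ pV pE) (n : ℕ) (v' : V') :
    ∑ w' : V', (Γ'.adj ^ n) v' w' = ∑ w : V, (Γ.adj ^ n) (pV v') w := by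
  classical
  have h := cover_intertwine_pow Γ Γ' pV pE hcov n
  have h2 : ∀ w : V, (Γ'.adj ^ n * coverP pV) v' w = (coverP pV * Γ.adj ^ n) v' w := by
    intro w; rw [h]
  calc ∑ w' : V', (Γ'.adj ^ n) v' w'
      = ∑ w' : V', ∑ w : V, (Γ'.adj ^ n) v' w' * (if pV w' = w then 1 else 0) := by
        apply Finset.sum_congr rfl; intro w' _; simp
    _ = ∑ w : V, ∑ w' : V', (Γ'.adj ^ n) v' w' * (if pV w' = w then 1 else 0) :=
        Finset.sum_comm
    _ = ∑ w : V, (Γ'.adj ^ n * coverP pV) v' w := by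
        apply Finset.sum_congr rfl; intro w _; rw [Matrix.mul_apply]; rfl
    _ = ∑ w : V, (coverP pV * Γ.adj ^ n) v' w := by
        apply Finset.sum_congr rfl; intro w _; exact h2 w
    _ = ∑ w : V, (Γ.adj ^ n) (pV v') w := by
        apply Finset.sum_congr rfl; intro w _; exact coverP_mul pV _ v' w

end Aux

attribute [local instance] Matrix.linftyOpNormedRing Matrix.linftyOpNormedAlgebra

/-- Let `Γ` be an irreducible finite directed graph with adjacency matrix `A`, and let
`Γ'` be a degree-two cover of `Γ` with adjacency matrix `A'`.  If `Γ'` is irreducible,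
then the Perron–Frobenius eigenvalues (spectral radii) of `A` and `A'` are equal. -/
theorem degree_two_cover_spectralRadius_eq
    (V E V' E' : Type) [Fintype V] [DecidableEq V] [Fintype E]
    [Fintype V'] [DecidableEq V'] [Fintype E']
    (Γ : Digraph' V E) (Γ' : Digraph' V' E')
    (pV : V' → V) (pE : E' → E)
    (hcov : IsDegreeTwoCover Γ' Γ pV pE)
    (hirr : Γ.Irreducible) (hirr' : Γ'.Irreducible) :
    spectralRadius ℂ (Γ.adj.map (Nat.cast : ℕ → ℂ)) =
      spectralRadius ℂ (Γ'.adj.map (Nat.cast : ℕ → ℂ)) := by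
  classical
  have hsurj : Function.Surjective pV := by
    intro v
    have h2 := hcov.2.2.1 v
    have : Nonempty {v' : V' // pV v' = v} :=
      (Nat.card_pos_iff.mp (by omega)).1
    obtain ⟨⟨v', hv'⟩⟩ := this
    exact ⟨v', hv'⟩
  -- nnnorm of powers agree
  have hnorm : ∀ n : ℕ, ‖(Γ.adj.map (Nat.cast : ℕ → ℂ)) ^ n‖₊ =
      ‖(Γ'.adj.map (Nat.cast : ℕ → ℂ)) ^ n‖₊ := by
    intro n
    have hmap : ∀ {W : Type} [Fintype W] [DecidableEq W] (B : Matrix W W ℕ),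
        (B.map (Nat.cast : ℕ → ℂ)) ^ n = (B ^ n).map (Nat.cast : ℕ → ℂ) := by
      intro W _ _ B
      have := map_pow ((Nat.castRingHom ℂ).mapMatrix) B n
      simpa [RingHom.mapMatrix_apply] using this.symm
    rw [hmap, hmap, Matrix.linfty_opNNNorm_def, Matrix.linfty_opNNNorm_def]
    have hrow : ∀ v' : V',
        (∑ w' : V', ‖((Γ'.adj ^ n).map (Nat.cast : ℕ → ℂ)) v' w'‖₊) =
        (∑ w : V, ‖((Γ.adj ^ n).map (Nat.cast : ℕ → ℂ)) (pV v') w‖₊) := by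
      intro v'
      have key := cover_rowsum_pow Γ Γ' pV pE hcov n v'
      have e1 : (∑ w' : V', ‖((Γ'.adj ^ n).map (Nat.cast : ℕ → ℂ)) v' w'‖₊)
          = ((∑ w' : V', (Γ'.adj ^ n) v' w' : ℕ) : NNReal) := by
        push_cast
        apply Finset.sum_congr rfl
        intro w' _
        simp [Matrix.map_apply]
      have e2 : (∑ w : V, ‖((Γ.adj ^ n).map (Nat.cast : ℕ → ℂ)) (pV v') w‖₊)
          = ((∑ w : V, (Γ.adj ^ n) (pV v') w : ℕ) : NNReal) := by
        push_cast
        apply Finset.sum_congr rfl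
        intro w _
        simp [Matrix.map_apply]
      rw [e1, e2, key]
    have hsup : (Finset.univ.sup fun v' : V' =>
          ∑ w' : V', ‖((Γ'.adj ^ n).map (Nat.cast : ℕ → ℂ)) v' w'‖₊)
        = Finset.univ.sup fun v : V =>
          ∑ w : V, ‖((Γ.adj ^ n).map (Nat.cast : ℕ → ℂ)) v w‖₊ := by
      have : (Finset.univ.sup fun v' : V' =>
            ∑ w' : V', ‖((Γ'.adj ^ n).map (Nat.cast : ℕ → ℂ)) v' w'‖₊)
          = Finset.univ.sup ((fun v : V =>
            ∑ w : V, ‖((Γ.adj ^ n).map (Nat.cast : ℕ → ℂ)) v w‖₊) ∘ pV) := by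
        apply Finset.sup_congr rfl
        intro v' _
        exact hrow v'
      rw [this, ← Finset.sup_image, Finset.image_univ_of_surjective hsurj]
    exact hsup.symm
  have h1 := spectrum.pow_nnnorm_pow_one_div_tendsto_nhds_spectralRadius
    (Γ.adj.map (Nat.cast : ℕ → ℂ))
  have h2 := spectrum.pow_nnnorm_pow_one_div_tendsto_nhds_spectralRadius
    (Γ'.adj.map (Nat.cast : ℕ → ℂ))
  have h1' : Filter.Tendsto
      (fun n : ℕ => (‖(Γ'.adj.map (Nat.cast : ℕ → ℂ)) ^ n‖₊ : ℝ≥0∞) ^ (1 / n : ℝ))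
      Filter.atTop (nhds (spectralRadius ℂ (Γ.adj.map (Nat.cast : ℕ → ℂ)))) := by
    convert h1 using 2 with n
    rw [hnorm n]
  exact tendsto_nhds_unique h1' h2
end

section
/- Let G be a finitely generated residually finite group and φ : G → ℤ a surjective homomorphism with finitely generated kernel N. Then N is fully separable in G, i.e., every finite-index subgroup of N is closed in the profinite topology on G. -/
open Subgroup Pointwise

/-- The group hom `Perm α →* Perm β` induced by an equiv `α ≃ β`. -/
def permCongrHom {α β : Type*} (e : α ≃ β) : Equiv.Perm α →* Equiv.Perm β where
  toFun := e.permCongr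
  map_one' := e.permCongr_refl
  map_mul' p q := by
    ext x
    simp [Equiv.permCongr_apply, Equiv.Perm.mul_apply]

/-- A finitely generated group has finitely many homomorphisms to a finite monoid. -/
lemma finite_monoidHom_of_fg {A P : Type*} [Group A] [Monoid P] [Finite P]
    (h : Group.FG A) : Finite (A →* P) := by
  obtain ⟨S, hS, hSfin⟩ := Group.fg_iff.mp h
  haveI := hSfin.to_subtype
  have hinj : Function.Injective (fun f : A →* P => (fun s : S => f s)) := by
    intro f g hfg
    refine MonoidHom.eq_of_eqOn_dense hS ?_
    intro x hx
    exact congrFun hfg ⟨x, hx⟩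
  exact Finite.of_injective _ hinj

/-- A finitely generated group has finitely many subgroups of a given finite index. -/
lemma finite_subgroups_of_index {A : Type*} [Group A] (h : Group.FG A)
    (n : ℕ) (hn : n ≠ 0) : {H : Subgroup A | H.index = n}.Finite := by
  rw [← Set.finite_coe_iff]
  haveI : Finite (A →* Equiv.Perm (Fin n)) := finite_monoidHom_of_fg h
  have hcard : ∀ H : {H : Subgroup A | H.index = n}, Nat.card (A ⧸ (H : Subgroup A)) = n := by
    intro H
    have := H.2
    simp only [Set.mem_setOf_eq] at this
    rw [← Subgroup.index_eq_card, this]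
  have hfin : ∀ H : {H : Subgroup A | H.index = n}, Finite (A ⧸ (H : Subgroup A)) := by
    intro H
    exact Nat.finite_of_card_ne_zero (by rw [hcard H]; exact hn)
  let e : ∀ H : {H : Subgroup A | H.index = n}, A ⧸ (H : Subgroup A) ≃ Fin n := by
    intro H
    haveI := hfin H
    exact Finite.equivFinOfCardEq (hcard H)
  let Φ : {H : Subgroup A | H.index = n} → (A →* Equiv.Perm (Fin n)) × Fin n :=
    fun H => ((permCongrHom (e H)).comp (MulAction.toPermHom A (A ⧸ (H : Subgroup A))),
      e H (QuotientGroup.mk 1))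
  have hmem : ∀ (H : {H : Subgroup A | H.index = n}) (a : A),
      a ∈ (H : Subgroup A) ↔ (Φ H).1 a ((Φ H).2) = (Φ H).2 := by
    intro H a
    have : (Φ H).1 a ((Φ H).2) = e H (QuotientGroup.mk a) := by
      simp only [Φ, MonoidHom.comp_apply, permCongrHom, MonoidHom.coe_mk, OneHom.coe_mk,
        Equiv.permCongr_apply, Equiv.symm_apply_apply, MulAction.toPermHom_apply,
        MulAction.toPerm_apply]
      congr 1
      show a • (QuotientGroup.mk 1 : A ⧸ (H : Subgroup A)) = QuotientGroup.mk a
      rw [MulAction.Quotient.smul_mk, smul_eq_mul, mul_one]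
    rw [this]
    constructor
    · intro ha
      have : (QuotientGroup.mk a : A ⧸ (H : Subgroup A)) = QuotientGroup.mk 1 := by
        rw [QuotientGroup.eq]
        simpa using inv_mem ha
      rw [this]
    · intro hfix
      have := (e H).injective hfix
      rw [QuotientGroup.eq] at this
      simpa using this
  have hinj : Function.Injective Φ := by
    intro H₁ H₂ hΦ
    ext a
    rw [hmem H₁ a, hmem H₂ a, hΦ]
  exact Finite.of_injective Φ hinj

/-- If `A` is a finitely generated normal subgroup of `G` and `N' ≤ A` has finite index
in `A`, then the normal core of `N'` in `G` still has finite index in `A`. -/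
lemma normalCore_finiteIndex_in {G : Type*} [Group G] {A : Subgroup G} [A.Normal]
    (hA : Group.FG A) {N' : Subgroup G} (hle : N' ≤ A)
    (hfi : (N'.subgroupOf A).FiniteIndex) : (N'.normalCore.subgroupOf A).FiniteIndex := by
  set n := (N'.subgroupOf A).index with hn_def
  have hn : n ≠ 0 := hfi.index_ne_zero
  let S : G → Subgroup A := fun g =>
    (N'.subgroupOf A).comap (MulAut.conjNormal (g⁻¹ : G) : A ≃* A).toMonoidHom
  have hSmem : ∀ (g : G) (x : A), x ∈ S g ↔ g⁻¹ * (x : G) * g ∈ N' := by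
    intro g x
    simp only [S, Subgroup.mem_comap, Subgroup.mem_subgroupOf]
    rw [show ((MulAut.conjNormal (g⁻¹ : G) : A ≃* A).toMonoidHom x : G)
        = g⁻¹ * (x : G) * g by simp [MulAut.conjNormal_apply]]
  have hSindex : ∀ g : G, (S g).index = n := by
    intro g
    exact (N'.subgroupOf A).index_comap_of_surjective
      (MulAut.conjNormal (g⁻¹ : G) : A ≃* A).surjective
  have hiInf : N'.normalCore.subgroupOf A = ⨅ g : G, S g := by
    ext x
    simp only [Subgroup.mem_subgroupOf, Subgroup.mem_iInf]
    constructor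
    · intro hx g
      rw [hSmem]
      simpa using hx g⁻¹
    · intro hx b
      have := (hSmem b⁻¹ x).mp (hx b⁻¹)
      simpa using this
  have hsub : Set.range S ⊆ {H : Subgroup A | H.index = n} := by
    rintro _ ⟨g, rfl⟩
    exact hSindex g
  haveI : Finite (Set.range S) := ((finite_subgroups_of_index hA n hn).subset hsub).to_subtype
  have h2 : (⨅ b : Set.range S, (b : Subgroup A)) = ⨅ g : G, S g := iInf_range' id S
  haveI : (⨅ b : Set.range S, (b : Subgroup A)).FiniteIndex := by
    refine Subgroup.finiteIndex_iInf ?_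
    rintro ⟨H, g, rfl⟩
    exact ⟨by rw [hSindex g]; exact hn⟩
  rw [hiInf, ← h2]
  infer_instance

/-- Let `G` be a finitely generated residually finite group and `φ : G → ℤ` a surjective
homomorphism with finitely generated kernel `N`.  Then `N` is fully separable in `G`:
every finite-index subgroup `N'` of `N` is closed in the profinite topology on `G`, i.e.
every element of `G` outside `N'` is separated from `N'` in some finite quotient of `G`. -/
theorem kernel_fully_separable_of_fg (G : Type) [Group G] (hfg : Group.FG G)
    (hrf : ∀ g : G, g ≠ 1 → ∃ N : Subgroup G, N.Normal ∧ N.FiniteIndex ∧ g ∉ N)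
    (φ : G →* Multiplicative ℤ) (hsurj : Function.Surjective φ)
    (hfgker : Group.FG φ.ker) :
    ∀ N' : Subgroup G, N' ≤ φ.ker → (N'.subgroupOf φ.ker).FiniteIndex →
      ∀ g : G, g ∉ N' →
        ∃ N : Subgroup G, N.Normal ∧ N.FiniteIndex ∧
          ∀ y ∈ N', (QuotientGroup.mk g : G ⧸ N) ≠ QuotientGroup.mk y := by
  intro N' hle hfi g hg
  -- the normal core `K` of `N'` in `G`: normal in `G`, contained in `N'`,
  -- of finite index in the kernel
  set K := N'.normalCore with hK_def
  have hKle : K ≤ N' := N'.normalCore_le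
  haveI hKfi : (K.subgroupOf φ.ker).FiniteIndex := normalCore_finiteIndex_in hfgker hle hfi
  -- an element `u` mapping to the generator of `ℤ`
  obtain ⟨u, hu⟩ := hsurj (Multiplicative.ofAdd 1)
  have hφu : ∀ k : ℤ, φ (u ^ k) = Multiplicative.ofAdd k := by
    intro k
    rw [map_zpow, hu, ← ofAdd_zsmul, smul_eq_mul, mul_one]
  -- the subgroup generated by `K` and `u` has finite index in `G`
  set T := K ⊔ Subgroup.zpowers u with hT_def
  let f : (↥φ.ker ⧸ (K.subgroupOf φ.ker)) → G ⧸ T :=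
    Quotient.map' (fun x : ↥φ.ker => (x : G)) (by
      intro a b hab
      rw [QuotientGroup.leftRel_apply] at hab ⊢
      have : ((a : G))⁻¹ * (b : G) ∈ K := by
        simpa using Subgroup.mem_subgroupOf.mp hab
      exact le_sup_left (α := Subgroup G) this)
  have hTsurj : Function.Surjective f := by
    intro x
    refine QuotientGroup.induction_on x ?_
    intro z
    have hy : z * u ^ (-(Multiplicative.toAdd (φ z))) ∈ φ.ker := by
      rw [MonoidHom.mem_ker, map_mul, hφu, ← ofAdd_toAdd (φ z), ← ofAdd_add]
      simp
    refine ⟨QuotientGroup.mk ⟨z * u ^ (-(Multiplicative.toAdd (φ z))), hy⟩, ?_⟩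
    show Quotient.map' _ _ (Quotient.mk'' _) = _
    rw [Quotient.map'_mk'']
    rw [show (QuotientGroup.mk z : G ⧸ T) = Quotient.mk'' z from rfl]
    apply Quotient.sound'
    rw [QuotientGroup.leftRel_apply]
    have : (z * u ^ (-(Multiplicative.toAdd (φ z))))⁻¹ * z
        = u ^ (Multiplicative.toAdd (φ z)) := by
      group
    rw [this]
    exact le_sup_right (α := Subgroup G) (Subgroup.zpow_mem _ (Subgroup.mem_zpowers u) _)
  haveI : Finite (G ⧸ T) := Finite.of_surjective _ hTsurj
  haveI hTfi : T.FiniteIndex := Subgroup.finiteIndex_of_finite_quotient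
  -- the normal core of `T`
  set C := T.normalCore with hC_def
  -- key: elements of `T` in the kernel are in `K`
  have hTker : ∀ x : G, x ∈ T → x ∈ φ.ker → x ∈ K := by
    intro x hxT hxker
    have hx' : x ∈ ((K : Set G) * (Subgroup.zpowers u : Set G)) := by
      rw [← Subgroup.normal_mul]
      exact hxT
    obtain ⟨k, hk, v, hv, rfl⟩ := Set.mem_mul.mp hx'
    obtain ⟨j, rfl⟩ := Subgroup.mem_zpowers_iff.mp hv
    have hφk : φ k = 1 := hle (hKle hk)
    have : φ (k * u ^ j) = Multiplicative.ofAdd j := by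
      rw [map_mul, hφk, one_mul, hφu]
    rw [MonoidHom.mem_ker] at hxker
    rw [hxker] at this
    have hj : j = 0 := by
      have := congrArg Multiplicative.toAdd this
      simpa using this.symm
    rw [hj]
    simpa using hk
  -- the modulus
  set m : ℕ := (Multiplicative.toAdd (φ g)).natAbs + 1 with hm_def
  haveI : NeZero m := ⟨Nat.succ_ne_zero _⟩
  set ψ : G →* Multiplicative (ZMod m) :=
    (AddMonoidHom.toMultiplicative (Int.castAddHom (ZMod m))).comp φ with hψ_def
  refine ⟨C ⊓ ψ.ker, inferInstance, inferInstance, ?_⟩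
  intro y hy heq
  rw [QuotientGroup.eq, Subgroup.mem_inf] at heq
  obtain ⟨hC', hψ'⟩ := heq
  -- from `ψ (g⁻¹ * y) = 1` deduce `φ g = 1`
  have hφy : φ y = 1 := hle hy
  have hφg : φ g = 1 := by
    rw [MonoidHom.mem_ker] at hψ'
    have : ((Multiplicative.toAdd (φ (g⁻¹ * y)) : ℤ) : ZMod m) = 0 := by
      have := congrArg Multiplicative.toAdd hψ'
      simpa [hψ_def, AddMonoidHom.toMultiplicative] using this
    rw [map_mul, map_inv, hφy, mul_one] at this
    have hdvd : (m : ℤ) ∣ Multiplicative.toAdd ((φ g)⁻¹) :=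
      (ZMod.intCast_zmod_eq_zero_iff_dvd _ _).mp this
    have habs : |Multiplicative.toAdd ((φ g)⁻¹)| < (m : ℤ) := by
      rw [hm_def]
      push_cast
      rw [show Multiplicative.toAdd ((φ g)⁻¹) = -(Multiplicative.toAdd (φ g)) by simp]
      rw [abs_neg, Int.abs_eq_natAbs]
      push_cast
      linarith
    have := Int.eq_zero_of_abs_lt_dvd hdvd habs
    have h0 : Multiplicative.toAdd (φ g) = 0 := by simpa using this
    rw [← ofAdd_toAdd (φ g), h0, ofAdd_zero]
  -- then `g⁻¹ * y ∈ K ≤ N'`, contradicting `g ∉ N'`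
  have hxker : g⁻¹ * y ∈ φ.ker := by
    rw [MonoidHom.mem_ker, map_mul, map_inv, hφg, hφy]
    simp
  have hxK : g⁻¹ * y ∈ K := hTker _ (T.normalCore_le hC') hxker
  have : g ∈ N' := by
    have h1 : g⁻¹ * y ∈ N' := hKle hxK
    have h2 : g⁻¹ = (g⁻¹ * y) * y⁻¹ := by group
    have h3 : g⁻¹ ∈ N' := h2 ▸ N'.mul_mem h1 (N'.inv_mem hy)
    simpa using N'.inv_mem h3
  exact hg this
end
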